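/- Consider a network polymatrix game Γ with payoffs u_k(x) = Σ_{(k,l)∈ℰ} ⟨x_k, A^{kl} x_l⟩, and let x : [0,∞) → Δ be a measurable trajectory of a learning dynamic. Suppose (i) the dynamic is no-regret, i.e. lim_{t→∞} (1/t) Σ_k R_k(t) = 0 where R_k(t) = max_{x'_k ∈ Δ_k} ∫_0^t [u_k(x'_k, x_{-k}(s)) − u_k(x_k(s), x_{-k}(s))] ds, and (ii) the time-averaged strategy μ(t) = (1/t)∫_0^t x(s) ds converges to an equilibrium x̄ as t → ∞. Then the Time Averaged Social Welfare satisfies lim_{t→∞} (1/t) ∫_0^t SW(x(s)) ds ≥ SW(x̄), where SW(x) = Σ_k u_k(x). -/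

import Mathlib

/-
STATEMENT 6: Consider a network polymatrix game Γ and a measurable trajectory
x : [0,∞) → Δ of a learning dynamic. Suppose (i) the dynamic is no-regret and
(ii) the time-averaged strategy μ(t) converges to an equilibrium x̄. Then the
Time Averaged Social Welfare satisfies lim_{t→∞} (1/t)∫_0^t SW(x(s)) ds ≥ SW(x̄).
-/

open Filter Topology

noncomputable section

/-- Joint strategy space. -/
abbrev Strat {N : ℕ} (n : Fin N → ℕ) := ∀ k, Fin (n k) → ℝ

/-- `x` lies in `Δ = Δ₁ × ⋯ × Δ_N`. -/
def JointSimplex {N : ℕ} {n : Fin N → ℕ} (x : Strat n) : Prop :=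
  ∀ k, x k ∈ stdSimplex ℝ (Fin (n k))

/-- Reward vector of player `k`: `r_k(x) = Σ_{(k,l)∈E} A^{kl} x_l`. -/
def polyReward {N : ℕ} {n : Fin N → ℕ} (E : Finset (Fin N × Fin N))
    (A : ∀ k l, Matrix (Fin (n k)) (Fin (n l)) ℝ) : Strat n → Strat n :=
  fun x k i => ∑ l ∈ Finset.univ.filter (fun l => (k, l) ∈ E), ∑ j, A k l i j * x l j

/-- Payoff of player `k`: `u_k(x) = Σ_{(k,l)∈E} ⟨x_k, A^{kl} x_l⟩`. -/
def polyPayoff {N : ℕ} {n : Fin N → ℕ} (E : Finset (Fin N × Fin N))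
    (A : ∀ k l, Matrix (Fin (n k)) (Fin (n l)) ℝ) (k : Fin N) (x : Strat n) : ℝ :=
  ∑ i, x k i * polyReward E A x k i

/-- Social Welfare `SW(x) = Σ_k u_k(x)`. -/
def SW {N : ℕ} {n : Fin N → ℕ} (E : Finset (Fin N × Fin N))
    (A : ∀ k l, Matrix (Fin (n k)) (Fin (n l)) ℝ) (x : Strat n) : ℝ :=
  ∑ k, polyPayoff E A k x

/-- Regret of player `k` at time `t` along the trajectory `x`:
`R_k(t) = max_{x'_k ∈ Δ_k} ∫_0^t [u_k(x'_k, x_{-k}(s)) − u_k(x(s))] ds`. -/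
def regret {N : ℕ} {n : Fin N → ℕ} (E : Finset (Fin N × Fin N))
    (A : ∀ k l, Matrix (Fin (n k)) (Fin (n l)) ℝ) (x : ℝ → Strat n) (k : Fin N)
    (t : ℝ) : ℝ :=
  sSup ((fun xk' => ∫ s in (0:ℝ)..t,
      (polyPayoff E A k (Function.update (x s) k xk') - polyPayoff E A k (x s))) ''
    stdSimplex ℝ (Fin (n k)))

open MeasureTheory

-- auxiliary
private lemma sum_split' {α β : Type*} [DecidableEq α] [AddCommMonoid β]
    (s : Finset α) (a : α) (g : α → β) :
    ∑ y ∈ s, g y = (if a ∈ s then g a else 0) + ∑ y ∈ s.erase a, g y := by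
  by_cases h : a ∈ s
  · rw [if_pos h, Finset.add_sum_erase _ _ h]
  · rw [if_neg h, zero_add, Finset.erase_eq_of_notMem h]

variable {N : ℕ} {n : Fin N → ℕ}

def Fk (E : Finset (Fin N × Fin N)) (k : Fin N) : Finset (Fin N) :=
  Finset.univ.filter (fun l => (k, l) ∈ E)

def Dfun (E : Finset (Fin N × Fin N)) (A : ∀ k l, Matrix (Fin (n k)) (Fin (n l)) ℝ)
    (k : Fin N) (z : Fin (n k) → ℝ) (y : Strat n) : ℝ :=
  ∑ i, z i * ((if k ∈ Fk E k then ∑ j, A k k i j * z j else 0)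
    + ∑ l ∈ (Fk E k).erase k, ∑ j, A k l i j * y l j)

variable (E : Finset (Fin N × Fin N)) (A : ∀ k l, Matrix (Fin (n k)) (Fin (n l)) ℝ)

lemma Dfun_eq (k : Fin N) (z : Fin (n k) → ℝ) (y : Strat n) :
    Dfun E A k z y = polyPayoff E A k (Function.update y k z) := by
  unfold Dfun polyPayoff polyReward Fk
  refine Finset.sum_congr rfl fun i _ => ?_
  rw [Function.update_self]
  congr 1
  rw [sum_split' (Finset.univ.filter fun l => (k, l) ∈ E) k
    (fun l => ∑ j, A k l i j * (Function.update y k z) l j)]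
  congr 1
  · simp only [Function.update_self]
  · refine Finset.sum_congr rfl fun l hl => ?_
    rw [Function.update_of_ne (Finset.ne_of_mem_erase hl)]

lemma Dfun_self (k : Fin N) (y : Strat n) : Dfun E A k (y k) y = polyPayoff E A k y := by
  rw [Dfun_eq, Function.update_eq_self]

def Cbound (k : Fin N) : ℝ := ∑ i, ∑ l ∈ Fk E k, ∑ j, |A k l i j|

lemma coord_abs_le {m : ℕ} {v : Fin m → ℝ} (hv : v ∈ stdSimplex ℝ (Fin m)) (j : Fin m) :
    |v j| ≤ 1 := by
  rw [abs_le]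
  refine ⟨by linarith [hv.1 j], ?_⟩
  calc v j ≤ ∑ i, v i := Finset.single_le_sum (fun i _ => hv.1 i) (Finset.mem_univ j)
    _ = 1 := hv.2

lemma abs_Dfun_le (k : Fin N) {z : Fin (n k) → ℝ} {y : Strat n}
    (hz : ∀ j, |z j| ≤ 1) (hy : ∀ l j, |y l j| ≤ 1) :
    |Dfun E A k z y| ≤ Cbound E A k := by
  unfold Dfun Cbound
  refine (Finset.abs_sum_le_sum_abs _ _).trans (Finset.sum_le_sum fun i _ => ?_)
  rw [abs_mul]
  have h1 : |(if k ∈ Fk E k then ∑ j, A k k i j * z j else 0)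
      + ∑ l ∈ (Fk E k).erase k, ∑ j, A k l i j * y l j| ≤ ∑ l ∈ Fk E k, ∑ j, |A k l i j| := by
    rw [sum_split' (Fk E k) k (fun l => ∑ j, |A k l i j|)]
    refine (abs_add_le _ _).trans (add_le_add ?_ ?_)
    · split_ifs with h
      · refine (Finset.abs_sum_le_sum_abs _ _).trans (Finset.sum_le_sum fun j _ => ?_)
        rw [abs_mul]
        calc |A k k i j| * |z j| ≤ |A k k i j| * 1 :=
              mul_le_mul_of_nonneg_left (hz j) (abs_nonneg _)
          _ = |A k k i j| := mul_one _
      · simp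
    · refine (Finset.abs_sum_le_sum_abs _ _).trans (Finset.sum_le_sum fun l _ => ?_)
      refine (Finset.abs_sum_le_sum_abs _ _).trans (Finset.sum_le_sum fun j _ => ?_)
      rw [abs_mul]
      calc |A k l i j| * |y l j| ≤ |A k l i j| * 1 :=
            mul_le_mul_of_nonneg_left (hy l j) (abs_nonneg _)
        _ = |A k l i j| := mul_one _
  calc |z i| * |_| ≤ 1 * (∑ l ∈ Fk E k, ∑ j, |A k l i j|) :=
        mul_le_mul (hz i) h1 (abs_nonneg _) zero_le_one
    _ = _ := one_mul _

lemma abs_payoff_le (k : Fin N) {y : Strat n} (hy : JointSimplex y) :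
    |polyPayoff E A k y| ≤ Cbound E A k := by
  rw [← Dfun_self E A k y]
  exact abs_Dfun_le E A k (fun j => coord_abs_le (hy k) j) (fun l j => coord_abs_le (hy l) j)

lemma Dfun_meas (k : Fin N) (z : Fin (n k) → ℝ) (x : ℝ → Strat n)
    (hxmeas : ∀ k i, Measurable fun s => x s k i) :
    Measurable fun s => Dfun E A k z (x s) := by
  unfold Dfun
  refine Finset.measurable_sum _ fun i _ => Measurable.const_mul ?_ _
  refine Measurable.const_add ?_ _
  exact Finset.measurable_sum _ fun l _ =>
    Finset.measurable_sum _ fun j _ => (hxmeas l j).const_mul _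

lemma payoff_meas (k : Fin N) (x : ℝ → Strat n)
    (hxmeas : ∀ k i, Measurable fun s => x s k i) :
    Measurable fun s => polyPayoff E A k (x s) := by
  unfold polyPayoff polyReward
  refine Finset.measurable_sum _ fun i _ => (hxmeas k i).mul ?_
  exact Finset.measurable_sum _ fun l _ =>
    Finset.measurable_sum _ fun j _ => (hxmeas l j).const_mul _

lemma Dfun_cont (k : Fin N) (z : Fin (n k) → ℝ) :
    Continuous fun y : Strat n => Dfun E A k z y := by
  unfold Dfun
  refine continuous_finset_sum _ fun i _ => Continuous.mul continuous_const ?_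
  refine Continuous.add continuous_const ?_
  refine continuous_finset_sum _ fun l _ => continuous_finset_sum _ fun j _ => ?_
  exact continuous_const.mul ((continuous_apply j).comp (continuous_apply l))

lemma meas_bdd_intervalIntegrable {f : ℝ → ℝ} {C t : ℝ} (ht : 0 ≤ t)
    (hm : Measurable f) (hb : ∀ s, 0 ≤ s → |f s| ≤ C) :
    IntervalIntegrable f volume 0 t := by
  rw [intervalIntegrable_iff]
  have hC : IntegrableOn (fun _ => C) (Set.uIoc 0 t) volume :=
    integrableOn_const measure_Ioc_lt_top.ne
  refine Integrable.mono' hC hm.aestronglyMeasurable.restrict ?_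
  filter_upwards [ae_restrict_mem measurableSet_uIoc] with s hs
  rw [Set.uIoc_of_le ht] at hs
  rw [Real.norm_eq_abs]
  exact hb s hs.1.le

lemma avg_lin {t : ℝ} (ht : 0 < t) {ι : Type*} (s : Finset ι) (a : ι → ℝ) (c : ℝ)
    (f : ι → ℝ → ℝ) (hf : ∀ i ∈ s, IntervalIntegrable (f i) volume 0 t) :
    (1 / t) * ∫ u in (0:ℝ)..t, (c + ∑ i ∈ s, a i * f i u)
      = c + ∑ i ∈ s, a i * ((1 / t) * ∫ u in (0:ℝ)..t, f i u) := by
  have hf' : ∀ i ∈ s, IntervalIntegrable (fun u => a i * f i u) volume 0 t :=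
    fun i hi => (hf i hi).const_mul _
  have hsum : IntervalIntegrable (fun u => ∑ i ∈ s, a i * f i u) volume 0 t := by
    have h2 : (∑ i ∈ s, fun u => a i * f i u) = fun u => ∑ i ∈ s, a i * f i u := by
      funext u; simp
    exact h2 ▸ IntervalIntegrable.sum s hf'
  rw [intervalIntegral.integral_add (intervalIntegrable_const (c := c)) hsum,
      intervalIntegral.integral_const,
      intervalIntegral.integral_finset_sum hf', smul_eq_mul, sub_zero, mul_add, Finset.mul_sum]
  congr 1
  · field_simp
  · refine Finset.sum_congr rfl fun i hi => ?_
    rw [intervalIntegral.integral_const_mul]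
    ring

lemma avg_Dfun (x : ℝ → Strat n) (hxmeas : ∀ k i, Measurable fun s => x s k i)
    (hxΔ : ∀ s, 0 ≤ s → JointSimplex (x s)) {t : ℝ} (ht : 0 < t) (k : Fin N)
    (z : Fin (n k) → ℝ) :
    (1 / t) * ∫ s in (0:ℝ)..t, Dfun E A k z (x s)
      = Dfun E A k z (fun l j => (1 / t) * ∫ s in (0:ℝ)..t, x s l j) := by
  have hco : ∀ l j, IntervalIntegrable (fun s => x s l j) volume 0 t := fun l j =>
    meas_bdd_intervalIntegrable ht.le (hxmeas l j) (fun s hs => coord_abs_le (hxΔ s hs l) j)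
  have hinner : ∀ (i : Fin (n k)) (l : Fin N),
      IntervalIntegrable (fun u => ∑ j, A k l i j * x u l j) volume 0 t := fun i l => by
    have h2 : (∑ j, fun u => A k l i j * x u l j) = fun u => ∑ j, A k l i j * x u l j := by
      funext u; simp
    exact h2 ▸ IntervalIntegrable.sum _ (fun j _ => (hco l j).const_mul _)
  have hstep3 : ∀ (i : Fin (n k)) (l : Fin N),
      (1/t) * ∫ u in (0:ℝ)..t, ∑ j, A k l i j * x u l j
        = ∑ j, A k l i j * ((1/t) * ∫ u in (0:ℝ)..t, x u l j) := fun i l => by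
    have := avg_lin ht Finset.univ (fun j => A k l i j) 0 (fun j u => x u l j)
      (fun j _ => hco l j)
    simpa using this
  have hstep2 : ∀ i : Fin (n k),
      (1/t) * ∫ u in (0:ℝ)..t,
        ((if k ∈ Fk E k then ∑ j, A k k i j * z j else 0)
          + ∑ l ∈ (Fk E k).erase k, ∑ j, A k l i j * x u l j)
        = (if k ∈ Fk E k then ∑ j, A k k i j * z j else 0)
          + ∑ l ∈ (Fk E k).erase k, (1/t) * ∫ u in (0:ℝ)..t, ∑ j, A k l i j * x u l j :=
    fun i => by
    have := avg_lin ht ((Fk E k).erase k) (fun _ => (1:ℝ))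
      (if k ∈ Fk E k then ∑ j, A k k i j * z j else 0)
      (fun l u => ∑ j, A k l i j * x u l j) (fun l _ => hinner i l)
    simpa [one_mul] using this
  have hFint : ∀ i : Fin (n k), IntervalIntegrable
      (fun u => (if k ∈ Fk E k then ∑ j, A k k i j * z j else 0)
        + ∑ l ∈ (Fk E k).erase k, ∑ j, A k l i j * x u l j) volume 0 t := fun i => by
    have h2 : (∑ l ∈ (Fk E k).erase k, fun u => ∑ j, A k l i j * x u l j)
        = fun u => ∑ l ∈ (Fk E k).erase k, ∑ j, A k l i j * x u l j := by funext u; simp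
    exact intervalIntegrable_const.add (h2 ▸ IntervalIntegrable.sum _ (fun l _ => hinner i l))
  have hstep1 := avg_lin ht Finset.univ z 0
    (fun i u => (if k ∈ Fk E k then ∑ j, A k k i j * z j else 0)
      + ∑ l ∈ (Fk E k).erase k, ∑ j, A k l i j * x u l j) (fun i _ => hFint i)
  simp only [zero_add] at hstep1
  unfold Dfun
  rw [hstep1]
  refine Finset.sum_congr rfl fun i _ => ?_
  rw [hstep2 i]
  congr 1
  congr 1
  exact Finset.sum_congr rfl fun l _ => hstep3 i l

theorem no_regret_learning_outperforms_equilibrium_welfare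
    {N : ℕ} {n : Fin N → ℕ}
    (E : Finset (Fin N × Fin N))
    (A : ∀ k l, Matrix (Fin (n k)) (Fin (n l)) ℝ)
    -- a measurable trajectory in Δ
    (x : ℝ → Strat n) (hxmeas : ∀ k i, Measurable fun s => x s k i)
    (hxΔ : ∀ s : ℝ, 0 ≤ s → JointSimplex (x s))
    -- (i) the dynamic is no-regret
    (hnoregret : Tendsto (fun t => (1 / t) * ∑ k, regret E A x k t) atTop (𝓝 0))
    -- x̄ is an equilibrium
    (xbar : Strat n) (hxbarΔ : JointSimplex xbar)
    (hxbar : ∀ k, ∀ zk ∈ stdSimplex ℝ (Fin (n k)),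
      ∑ i, zk i * polyReward E A xbar k i ≤ ∑ i, xbar k i * polyReward E A xbar k i)
    -- (ii) the time-averaged strategy μ(t) = (1/t)∫_0^t x(s) ds converges to x̄
    (hμ : Tendsto (fun t : ℝ => fun k i => (1 / t) * ∫ s in (0:ℝ)..t, x s k i)
      atTop (𝓝 xbar)) :
    -- the Time Averaged Social Welfare is asymptotically ≥ SW(x̄)
    SW E A xbar ≤ Filter.liminf (fun t => (1 / t) * ∫ s in (0:ℝ)..t, SW E A (x s)) atTop := by
  classical
  set μt : ℝ → Strat n := fun t k i => (1 / t) * ∫ s in (0:ℝ)..t, x s k i with hμt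
  set f : ℝ → ℝ := fun t => (1 / t) * ∫ s in (0:ℝ)..t, SW E A (x s) with hf
  set r : ℝ → ℝ := fun t => (1 / t) * ∑ k, regret E A x k t with hr
  set h : ℝ → ℝ := fun t => ∑ k, Dfun E A k (xbar k) (μt t) with hh
  have hxb1 : ∀ (k : Fin N) j, |xbar k j| ≤ 1 := fun k j => coord_abs_le (hxbarΔ k) j
  have key : ∀ t : ℝ, 0 < t → h t - r t ≤ f t := by
    intro t ht
    have hPint : ∀ k, IntervalIntegrable (fun s => polyPayoff E A k (x s)) volume 0 t :=
      fun k => meas_bdd_intervalIntegrable ht.le (payoff_meas E A k x hxmeas)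
        (fun s hs => abs_payoff_le E A k (hxΔ s hs))
    have hDint : ∀ k, IntervalIntegrable (fun s => Dfun E A k (xbar k) (x s)) volume 0 t :=
      fun k => meas_bdd_intervalIntegrable ht.le (Dfun_meas E A k (xbar k) x hxmeas)
        (fun s hs => abs_Dfun_le E A k (hxb1 k) (fun l j => coord_abs_le (hxΔ s hs l) j))
    have hreg : ∀ k, (∫ s in (0:ℝ)..t, Dfun E A k (xbar k) (x s))
        - ∫ s in (0:ℝ)..t, polyPayoff E A k (x s) ≤ regret E A x k t := by
      intro k
      have hmem : (∫ s in (0:ℝ)..t,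
          (polyPayoff E A k (Function.update (x s) k (xbar k)) - polyPayoff E A k (x s))) ∈
          ((fun xk' => ∫ s in (0:ℝ)..t,
            (polyPayoff E A k (Function.update (x s) k xk') - polyPayoff E A k (x s))) ''
            stdSimplex ℝ (Fin (n k))) := ⟨xbar k, hxbarΔ k, rfl⟩
      have hbdd : BddAbove ((fun xk' => ∫ s in (0:ℝ)..t,
          (polyPayoff E A k (Function.update (x s) k xk') - polyPayoff E A k (x s))) ''
          stdSimplex ℝ (Fin (n k))) := by
        refine ⟨(Cbound E A k + Cbound E A k) * |t - 0|, ?_⟩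
        rintro v ⟨z, hz, rfl⟩
        have hb : ∀ s ∈ Set.uIoc (0:ℝ) t,
            ‖polyPayoff E A k (Function.update (x s) k z) - polyPayoff E A k (x s)‖
              ≤ Cbound E A k + Cbound E A k := by
          intro s hs
          rw [Set.uIoc_of_le ht.le] at hs
          have hsΔ := hxΔ s hs.1.le
          rw [Real.norm_eq_abs]
          refine (abs_sub _ _).trans (add_le_add ?_ ?_)
          · rw [← Dfun_eq]
            exact abs_Dfun_le E A k (fun j => coord_abs_le hz j)
              (fun l j => coord_abs_le (hsΔ l) j)
          · exact abs_payoff_le E A k hsΔ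
        exact (le_abs_self _).trans
          (by simpa [Real.norm_eq_abs] using
            intervalIntegral.norm_integral_le_of_norm_le_const hb)
      have hle := le_csSup hbdd hmem
      have hint_eq : (fun s => polyPayoff E A k (Function.update (x s) k (xbar k))
            - polyPayoff E A k (x s))
          = fun s => Dfun E A k (xbar k) (x s) - polyPayoff E A k (x s) := by
        funext s; rw [Dfun_eq]
      rw [hint_eq, intervalIntegral.integral_sub (hDint k) (hPint k)] at hle
      exact hle
    have h1t : (0:ℝ) < 1 / t := by positivity
    have hk : ∀ k : Fin N, Dfun E A k (xbar k) (μt t) - (1/t) * regret E A x k t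
        ≤ (1/t) * ∫ s in (0:ℝ)..t, polyPayoff E A k (x s) := by
      intro k
      have h2 := mul_le_mul_of_nonneg_left (hreg k) h1t.le
      rw [mul_sub] at h2
      have h4 : Dfun E A k (xbar k) (μt t)
          = (1/t) * ∫ s in (0:ℝ)..t, Dfun E A k (xbar k) (x s) :=
        (avg_Dfun E A x hxmeas hxΔ ht k (xbar k)).symm
      rw [h4]
      linarith
    have hft : f t = ∑ k, (1/t) * ∫ s in (0:ℝ)..t, polyPayoff E A k (x s) := by
      simp only [hf]
      unfold SW
      rw [intervalIntegral.integral_finset_sum (fun k _ => hPint k), Finset.mul_sum]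
    rw [hft]
    simp only [hh, hr]
    rw [Finset.mul_sum, ← Finset.sum_sub_distrib]
    exact Finset.sum_le_sum fun k _ => hk k
  have hcont : Continuous fun y : Strat n => ∑ k, Dfun E A k (xbar k) y :=
    continuous_finset_sum _ fun k _ => Dfun_cont E A k (xbar k)
  have hhtend : Tendsto h atTop (𝓝 (SW E A xbar)) := by
    have hc := (hcont.tendsto xbar).comp hμ
    have heq : SW E A xbar = ∑ k, Dfun E A k (xbar k) xbar := by
      unfold SW
      exact Finset.sum_congr rfl fun k _ => (Dfun_self E A k xbar).symm
    rw [heq]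
    exact hc
  have hhr : Tendsto (fun t => h t - r t) atTop (𝓝 (SW E A xbar)) := by
    have := hhtend.sub hnoregret
    simpa using this
  have hev : ∀ᶠ t in atTop, h t - r t ≤ f t :=
    (eventually_gt_atTop 0).mono fun t ht => key t ht
  have hcob : IsCoboundedUnder (· ≥ ·) atTop f := by
    apply isCoboundedUnder_ge_of_eventually_le atTop (x := ∑ k, Cbound E A k)
    filter_upwards [eventually_gt_atTop 0] with t ht
    have hb : ∀ s ∈ Set.uIoc (0:ℝ) t, ‖SW E A (x s)‖ ≤ ∑ k, Cbound E A k := by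
      intro s hs
      rw [Set.uIoc_of_le ht.le] at hs
      rw [Real.norm_eq_abs]
      unfold SW
      exact (Finset.abs_sum_le_sum_abs _ _).trans
        (Finset.sum_le_sum fun k _ => abs_payoff_le E A k (hxΔ s hs.1.le))
    have h2 := intervalIntegral.norm_integral_le_of_norm_le_const hb
    rw [Real.norm_eq_abs] at h2
    have h3 : |t - 0| = t := by rw [sub_zero, abs_of_pos ht]
    rw [h3] at h2
    calc f t ≤ (1/t) * |∫ s in (0:ℝ)..t, SW E A (x s)| := by
          simp only [hf]
          exact mul_le_mul_of_nonneg_left (le_abs_self _) (by positivity)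
      _ ≤ (1/t) * ((∑ k, Cbound E A k) * t) :=
          mul_le_mul_of_nonneg_left h2 (by positivity)
      _ = ∑ k, Cbound E A k := by field_simp
  calc SW E A xbar = liminf (fun t => h t - r t) atTop := hhr.liminf_eq.symm
    _ ≤ liminf f atTop := liminf_le_liminf hev hhr.isBoundedUnder_ge hcob
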